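/- Let A, X, X′ be N×N Hermitian matrices, let h: ℝ → ℝ be Lipschitz with Lipschitz constant ‖h‖_Lip, and let f: ℝ → ℝ be any function. Then |Tr[h(X + A) f(A)] − Tr[h(X′ + A) f(A)]| ≤ ‖f(A)‖₂ · ‖h‖_Lip · ‖X − X′‖₂. In particular, if f(A) is an orthogonal projection of rank k, the map X ↦ Tr[h(X + A) f(A)] on Hermitian matrices is Lipschitz with constant √k · ‖h‖_Lip with respect to the Hilbert–Schmidt norm. -/

import Mathlib

open Matrix

/-- Functional calculus on Hermitian matrices: apply `g : ℝ → ℝ` to the eigenvalues in a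
spectral decomposition (junk value `0` on non-Hermitian matrices). -/
noncomputable def matFun {N : ℕ} (A : Matrix (Fin N) (Fin N) ℂ) (g : ℝ → ℝ) :
    Matrix (Fin N) (Fin N) ℂ :=
  if h : A.IsHermitian then h.cfc g else 0

/-- Hilbert–Schmidt norm `‖M‖₂ = (Tr M M^*)^{1/2}`. -/
noncomputable def hsNorm {m n : ℕ} (M : Matrix (Fin m) (Fin n) ℂ) : ℝ :=
  Real.sqrt ((Matrix.trace (M * Mᴴ)).re)

variable {N : ℕ}

noncomputable def sqSum (M : Matrix (Fin N) (Fin N) ℂ) : ℝ :=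
  ∑ i, ∑ j, Complex.normSq (M i j)

lemma sqSum_nonneg (M : Matrix (Fin N) (Fin N) ℂ) : 0 ≤ sqSum M := by
  refine Finset.sum_nonneg fun i _ => Finset.sum_nonneg fun j _ => Complex.normSq_nonneg _

lemma trace_re_eq_sqSum (M : Matrix (Fin N) (Fin N) ℂ) :
    (Matrix.trace (M * Mᴴ)).re = sqSum M := by
  simp [Matrix.trace, Matrix.mul_apply, Matrix.diag, Complex.mul_conj, sqSum,
    Complex.re_sum]

lemma sumsum {α : Type*} [AddCommMonoid α] (f : Fin N → Fin N → α) :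
    ∑ p : Fin N × Fin N, f p.1 p.2 = ∑ i, ∑ j, f i j := Fintype.sum_prod_type (f := fun p => f p.1 p.2)

lemma abs_trace_mul_le (M P : Matrix (Fin N) (Fin N) ℂ) :
    ‖Matrix.trace (M * P)‖ ≤ Real.sqrt (sqSum M) * Real.sqrt (sqSum P) := by
  have h1 : Matrix.trace (M * P) = ∑ p : Fin N × Fin N, M p.1 p.2 * P p.2 p.1 := by
    rw [sumsum fun i j => M i j * P j i]
    simp [Matrix.trace, Matrix.mul_apply, Matrix.diag]
  have h2 : ‖Matrix.trace (M * P)‖ ≤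
      ∑ p : Fin N × Fin N, ‖M p.1 p.2‖ * ‖P p.2 p.1‖ := by
    rw [h1]
    refine (norm_sum_le _ _).trans (le_of_eq (Finset.sum_congr rfl fun p _ => ?_))
    simp
  refine h2.trans ?_
  have h3 := Real.sum_mul_le_sqrt_mul_sqrt Finset.univ
    (fun p : Fin N × Fin N => ‖M p.1 p.2‖)
    (fun p : Fin N × Fin N => ‖P p.2 p.1‖)
  refine h3.trans (le_of_eq ?_)
  congr 1
  · congr 1
    rw [sumsum fun i j => ‖M i j‖ ^ 2]
    simp [sqSum, Complex.sq_norm]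
  · congr 1
    rw [sumsum fun i j => ‖P j i‖ ^ 2, sqSum, Finset.sum_comm]
    simp [Complex.sq_norm]

lemma trace_conj_unitary {u v M : Matrix (Fin N) (Fin N) ℂ}
    (hu : u * uᴴ = 1) (hv : v * vᴴ = 1) :
    Matrix.trace ((uᴴ * M * v) * (uᴴ * M * v)ᴴ) = Matrix.trace (M * Mᴴ) := by
  have : (uᴴ * M * v) * (uᴴ * M * v)ᴴ = uᴴ * (M * Mᴴ) * u := by
    simp only [Matrix.conjTranspose_mul, Matrix.conjTranspose_conjTranspose]
    calc uᴴ * M * v * (vᴴ * (Mᴴ * u)) = uᴴ * M * (v * vᴴ) * (Mᴴ * u) := by noncomm_ring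
    _ = uᴴ * (M * Mᴴ) * u := by rw [hv]; noncomm_ring
  rw [this, Matrix.trace_mul_cycle, ← Matrix.mul_assoc, hu, Matrix.one_mul]

lemma sqSum_conj_unitary {u v M : Matrix (Fin N) (Fin N) ℂ}
    (hu : u * uᴴ = 1) (hv : v * vᴴ = 1) :
    sqSum (uᴴ * M * v) = sqSum M := by
  rw [← trace_re_eq_sqSum, ← trace_re_eq_sqSum, trace_conj_unitary hu hv]

lemma hsNorm_eq_sqrt_sqSum (M : Matrix (Fin N) (Fin N) ℂ) :
    hsNorm M = Real.sqrt (sqSum M) := by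
  rw [hsNorm, trace_re_eq_sqSum]

lemma sqSum_cfc_sub_le {Y Y' : Matrix (Fin N) (Fin N) ℂ}
    (hY : Y.IsHermitian) (hY' : Y'.IsHermitian)
    {L : NNReal} {g : ℝ → ℝ} (hg : LipschitzWith L g) :
    sqSum (hY.cfc g - hY'.cfc g) ≤ (L : ℝ)^2 * sqSum (Y - Y') := by
  set u := (Matrix.IsHermitian.eigenvectorUnitary hY : Matrix (Fin N) (Fin N) ℂ) with hu_def
  set v := (Matrix.IsHermitian.eigenvectorUnitary hY' : Matrix (Fin N) (Fin N) ℂ) with hv_def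
  have hu : u * uᴴ = 1 := Matrix.mem_unitaryGroup_iff.mp (Matrix.IsHermitian.eigenvectorUnitary hY).2
  have hu' : uᴴ * u = 1 := Matrix.mem_unitaryGroup_iff'.mp (Matrix.IsHermitian.eigenvectorUnitary hY).2
  have hv : v * vᴴ = 1 := Matrix.mem_unitaryGroup_iff.mp (Matrix.IsHermitian.eigenvectorUnitary hY').2
  have hv' : vᴴ * v = 1 := Matrix.mem_unitaryGroup_iff'.mp (Matrix.IsHermitian.eigenvectorUnitary hY').2
  set W := uᴴ * v with hW_def
  have key : ∀ a b : Fin N → ℝ,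
      sqSum (u * Matrix.diagonal ((RCLike.ofReal : ℝ → ℂ) ∘ a) * uᴴ
            - v * Matrix.diagonal ((RCLike.ofReal : ℝ → ℂ) ∘ b) * vᴴ)
        = ∑ i, ∑ j, (a i - b j)^2 * Complex.normSq (W i j) := by
    intro a b
    set Da := Matrix.diagonal ((RCLike.ofReal : ℝ → ℂ) ∘ a)
    set Db := Matrix.diagonal ((RCLike.ofReal : ℝ → ℂ) ∘ b)
    have hconj : uᴴ * (u * Da * uᴴ - v * Db * vᴴ) * v = Da * W - W * Db := by
      rw [Matrix.mul_sub, Matrix.sub_mul]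
      congr 1
      · calc uᴴ * (u * Da * uᴴ) * v = (uᴴ * u) * Da * (uᴴ * v) := by noncomm_ring
        _ = Da * W := by rw [hu', Matrix.one_mul]
      · calc uᴴ * (v * Db * vᴴ) * v = (uᴴ * v) * Db * (vᴴ * v) := by noncomm_ring
        _ = W * Db := by rw [hv', Matrix.mul_one]
    rw [← sqSum_conj_unitary hu hv (M := u * Da * uᴴ - v * Db * vᴴ), hconj]
    unfold sqSum
    refine Finset.sum_congr rfl fun i _ => Finset.sum_congr rfl fun j _ => ?_
    have : (Da * W - W * Db) i j = ((a i - b j : ℝ) : ℂ) * W i j := by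
      simp [Da, Db, Matrix.sub_apply, Matrix.diagonal_mul, Matrix.mul_diagonal]
      ring
    rw [this, Complex.normSq_mul, Complex.normSq_ofReal]
    ring
  have hYd := hY.spectral_theorem
  have hY'd := hY'.spectral_theorem
  have e1 : sqSum (hY.cfc g - hY'.cfc g)
      = ∑ i, ∑ j, (g (hY.eigenvalues i) - g (hY'.eigenvalues j))^2 * Complex.normSq (W i j) := by
    rw [show hY.cfc g - hY'.cfc g
        = u * Matrix.diagonal ((RCLike.ofReal : ℝ → ℂ) ∘ (g ∘ hY.eigenvalues)) * uᴴ
          - v * Matrix.diagonal ((RCLike.ofReal : ℝ → ℂ) ∘ (g ∘ hY'.eigenvalues)) * vᴴ by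
      rw [Matrix.IsHermitian.cfc, Matrix.IsHermitian.cfc]
      rfl]
    rw [key]
    simp [Function.comp]
  have e2 : sqSum (Y - Y')
      = ∑ i, ∑ j, (hY.eigenvalues i - hY'.eigenvalues j)^2 * Complex.normSq (W i j) := by
    rw [show Y - Y'
        = u * Matrix.diagonal ((RCLike.ofReal : ℝ → ℂ) ∘ hY.eigenvalues) * uᴴ
          - v * Matrix.diagonal ((RCLike.ofReal : ℝ → ℂ) ∘ hY'.eigenvalues) * vᴴ by
      conv_lhs => rw [hYd, hY'd]
      rfl]
    rw [key]
  rw [e1, e2, Finset.mul_sum]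
  refine Finset.sum_le_sum fun i _ => ?_
  rw [Finset.mul_sum]
  refine Finset.sum_le_sum fun j _ => ?_
  rw [← mul_assoc]
  refine mul_le_mul_of_nonneg_right ?_ (Complex.normSq_nonneg _)
  have hd := hg.dist_le_mul (hY.eigenvalues i) (hY'.eigenvalues j)
  rw [Real.dist_eq, Real.dist_eq] at hd
  calc (g (hY.eigenvalues i) - g (hY'.eigenvalues j))^2
      = |g (hY.eigenvalues i) - g (hY'.eigenvalues j)|^2 := (sq_abs _).symm
    _ ≤ ((L:ℝ) * |hY.eigenvalues i - hY'.eigenvalues j|)^2 := by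
        exact pow_le_pow_left₀ (abs_nonneg _) hd 2
    _ = (L:ℝ)^2 * (hY.eigenvalues i - hY'.eigenvalues j)^2 := by
        rw [mul_pow, sq_abs]

lemma sqSum_proj {P : Matrix (Fin N) (Fin N) ℂ} (hP : P.IsHermitian)
    (hidem : P * P = P) {k : ℕ} (hrank : P.rank = k) :
    sqSum P = k := by
  classical
  set u := (Matrix.IsHermitian.eigenvectorUnitary hP : Matrix (Fin N) (Fin N) ℂ) with hu_def
  have hu : u * uᴴ = 1 := Matrix.mem_unitaryGroup_iff.mp (Matrix.IsHermitian.eigenvectorUnitary hP).2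
  set μ := hP.eigenvalues with hμ_def
  set D := Matrix.diagonal ((RCLike.ofReal : ℝ → ℂ) ∘ μ) with hD_def
  have hDdiag : uᴴ * P * u = D := by
    have := hP.conjStarAlgAut_star_eigenvectorUnitary
    rw [Unitary.conjStarAlgAut_star_apply] at this
    exact this
  have hDD : D * D = D := by
    rw [← hDdiag]
    calc (uᴴ * P * u) * (uᴴ * P * u) = uᴴ * P * (u * uᴴ) * P * u := by noncomm_ring
      _ = uᴴ * (P * P) * u := by rw [hu]; noncomm_ring
      _ = uᴴ * P * u := by rw [hidem]
  have hμ01 : ∀ i, μ i = 0 ∨ μ i = 1 := by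
    intro i
    rw [hD_def, Matrix.diagonal_mul_diagonal] at hDD
    have := congrFun (Matrix.diagonal_injective hDD) i
    simp only [Function.comp_apply, Pi.mul_apply] at this
    have hr : μ i * μ i = μ i := by exact_mod_cast this
    rcases mul_eq_zero.mp (by linear_combination hr : μ i * (μ i - 1) = 0) with h0 | h1
    · exact Or.inl h0
    · exact Or.inr (by linarith [sub_eq_zero.mp h1])
  -- sqSum P = (trace P).re
  have h1 : sqSum P = (Matrix.trace P).re := by
    rw [← trace_re_eq_sqSum, hP.eq, hidem]
  -- trace P = trace D
  have h2 : Matrix.trace P = Matrix.trace D := by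
    conv_lhs => rw [hP.spectral_theorem, Unitary.conjStarAlgAut_apply]
    rw [Matrix.trace_mul_cycle]
    rw [show star u * u = 1 from Matrix.mem_unitaryGroup_iff'.mp (Matrix.IsHermitian.eigenvectorUnitary hP).2]
    rw [Matrix.one_mul]
  -- (trace D).re = ∑ μ i
  have h3 : (Matrix.trace D).re = ∑ i, μ i := by
    simp [hD_def, Matrix.trace, Matrix.diag, Complex.re_sum]
  -- rank P = card of nonzero eigenvalues
  have h4 : (k : ℝ) = ∑ i, μ i := by
    have hr := hP.rank_eq_card_non_zero_eigs
    rw [hrank] at hr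
    have : (Fintype.card {i // μ i ≠ 0} : ℝ) = ∑ i, μ i := by
      rw [Fintype.card_subtype]
      rw [Finset.card_eq_sum_ones]
      push_cast
      rw [Finset.sum_filter]
      refine Finset.sum_congr rfl fun i _ => ?_
      rcases hμ01 i with h0 | h0 <;> simp [h0]
    rw [hr] at *
    exact_mod_cast this
  rw [h1, h2, h3, ← h4]

/-- Lemma `Lipschitz`, additive case:
`|Tr[h(X+A)f(A)] − Tr[h(X'+A)f(A)]| ≤ ‖f(A)‖₂ ‖h‖_Lip ‖X−X'‖₂`; in particular if `f(A)` is an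
orthogonal projection of rank `k`, the map `X ↦ Tr[h(X+A)f(A)]` is `√k‖h‖_Lip`-Lipschitz for
the Hilbert–Schmidt norm. -/
theorem statement6 {N : ℕ} (A X X' : Matrix (Fin N) (Fin N) ℂ)
    (hA : A.IsHermitian) (hX : X.IsHermitian) (hX' : X'.IsHermitian)
    (L : NNReal) (h : ℝ → ℝ) (hLip : LipschitzWith L h) (f : ℝ → ℝ) :
    ‖Matrix.trace (matFun (X + A) h * matFun A f)
        - Matrix.trace (matFun (X' + A) h * matFun A f)‖
      ≤ hsNorm (matFun A f) * L * hsNorm (X - X') ∧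
    (∀ k : ℕ, (matFun A f).IsHermitian → matFun A f * matFun A f = matFun A f →
      (matFun A f).rank = k →
      ‖Matrix.trace (matFun (X + A) h * matFun A f)
          - Matrix.trace (matFun (X' + A) h * matFun A f)‖
        ≤ Real.sqrt k * L * hsNorm (X - X')) := by
  have hXA : (X + A).IsHermitian := hX.add hA
  have hX'A : (X' + A).IsHermitian := hX'.add hA
  have hmf1 : matFun (X + A) h = hXA.cfc h := dif_pos hXA
  have hmf2 : matFun (X' + A) h = hX'A.cfc h := dif_pos hX'A
  have hdiff : Matrix.trace (matFun (X + A) h * matFun A f)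
        - Matrix.trace (matFun (X' + A) h * matFun A f)
      = Matrix.trace ((hXA.cfc h - hX'A.cfc h) * matFun A f) := by
    rw [hmf1, hmf2, Matrix.sub_mul, Matrix.trace_sub]
  have hsub : (X + A) - (X' + A) = X - X' := by abel
  have hb : ‖Matrix.trace (matFun (X + A) h * matFun A f)
        - Matrix.trace (matFun (X' + A) h * matFun A f)‖
      ≤ Real.sqrt (sqSum (hXA.cfc h - hX'A.cfc h)) * Real.sqrt (sqSum (matFun A f)) := by
    rw [hdiff]; exact abs_trace_mul_le _ _
  have hlip : Real.sqrt (sqSum (hXA.cfc h - hX'A.cfc h))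
      ≤ (L : ℝ) * Real.sqrt (sqSum (X - X')) := by
    have h1 := sqSum_cfc_sub_le hXA hX'A hLip
    rw [hsub] at h1
    calc Real.sqrt (sqSum (hXA.cfc h - hX'A.cfc h))
        ≤ Real.sqrt ((L : ℝ)^2 * sqSum (X - X')) := Real.sqrt_le_sqrt h1
      _ = (L : ℝ) * Real.sqrt (sqSum (X - X')) := by
          rw [Real.sqrt_mul (by positivity), Real.sqrt_sq L.coe_nonneg]
  have main : ‖Matrix.trace (matFun (X + A) h * matFun A f)
        - Matrix.trace (matFun (X' + A) h * matFun A f)‖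
      ≤ hsNorm (matFun A f) * L * hsNorm (X - X') := by
    rw [hsNorm_eq_sqrt_sqSum, hsNorm_eq_sqrt_sqSum]
    calc ‖Matrix.trace (matFun (X + A) h * matFun A f)
          - Matrix.trace (matFun (X' + A) h * matFun A f)‖
        ≤ Real.sqrt (sqSum (hXA.cfc h - hX'A.cfc h)) * Real.sqrt (sqSum (matFun A f)) := hb
      _ ≤ ((L : ℝ) * Real.sqrt (sqSum (X - X'))) * Real.sqrt (sqSum (matFun A f)) :=
          mul_le_mul_of_nonneg_right hlip (Real.sqrt_nonneg _)
      _ = Real.sqrt (sqSum (matFun A f)) * L * Real.sqrt (sqSum (X - X')) := by ring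
  refine ⟨main, fun k hP hidem hrank => ?_⟩
  have hk : hsNorm (matFun A f) = Real.sqrt k := by
    rw [hsNorm_eq_sqrt_sqSum, sqSum_proj hP hidem hrank]
  rw [← hk]
  exact main
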